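/- Let C be a finite component module over a poset P with generators g₁,...,gₙ (n ≥ 2) such that g₁ is minimal (its position is below the position of every other generator). Then C decomposes as a direct sum I ⊕ S, where I is an interval module (the submodule generated by g₁) and S is a nonzero semi-component module. -/

import Mathlib

section

variable {K : Type*} [Field K] {P : Type*} [PartialOrder P] {d : P → ℕ}

/-- A matrix is a component matrix if all entries are `0` or `1` and every
column contains exactly one `1`. -/
def IsComponentMatrix {ι κ : Type*} (A : Matrix ι κ K) : Prop :=
  (∀ i j, A i j = 0 ∨ A i j = 1) ∧ ∀ j, ∃! i, A i j = 1

/-- A matrix is a semi-component matrix if all entries are `0` or `1` and every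
column contains at most one `1`. -/
def IsSemiComponentMatrix {ι κ : Type*} (A : Matrix ι κ K) : Prop :=
  (∀ i j, A i j = 0 ∨ A i j = 1) ∧ ∀ j i i', A i j = 1 → A i' j = 1 → i = i'

/-- The data of a persistence module over `P` with dimension vector `d`,
realised on the standard carriers `Fin (d p) → K`. -/
def PersistenceData (K : Type*) [Field K] (P : Type*) [PartialOrder P]
    (d : P → ℕ) :=
  ∀ p q : P, p ≤ q → ((Fin (d p) → K) →ₗ[K] (Fin (d q) → K))

/-- Functoriality of the structure maps. -/
def IsFunctorial (M : PersistenceData K P d) : Prop :=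
  (∀ p : P, M p p le_rfl = LinearMap.id) ∧
  ∀ (p q r : P) (hpq : p ≤ q) (hqr : q ≤ r),
    M q r hqr ∘ₗ M p q hpq = M p r (hpq.trans hqr)

/-- The standard basis vector `i` at position `p` is a generator: it is not in
the image of any structure map from a strictly smaller position. -/
def IsGenerator (M : PersistenceData K P d) (p : P) (i : Fin (d p)) : Prop :=
  ∀ (q : P) (h : q ≤ p), q ≠ p →
    (Pi.single i 1 : Fin (d p) → K) ∉ LinearMap.range (M q p h)

end

/-- Let `C` be a finite component module over a poset `P` (with component basis
the standard bases) having at least two generators, one of which, `g₁` at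
position `p₁`, is minimal (i.e. `p₁` is below the position of every generator).
Then `C` decomposes as a direct sum `I ⊕ S` of two nonzero subrepresentations,
where `I` is an interval module (pointwise dimension at most one, restricted
structure maps isomorphisms on the support) and `S` is a nonzero
semi-component module. -/
theorem stmt_16 (K : Type*) [Field K] (P : Type*) [PartialOrder P] [Fintype P]
    (d : P → ℕ) (M : PersistenceData K P d)
    (hfunct : IsFunctorial M)
    (hcomp : ∀ (p q : P) (h : p ≤ q),
      IsComponentMatrix (LinearMap.toMatrix' (M p q h)))
    (p₁ : P) (i₁ : Fin (d p₁)) (hgen : IsGenerator M p₁ i₁)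
    (hmin : ∀ (q : P) (j : Fin (d q)), IsGenerator M q j → p₁ ≤ q)
    (htwo : ∃ (q : P) (j : Fin (d q)), IsGenerator M q j ∧
      (⟨q, j⟩ : Σ p : P, Fin (d p)) ≠ ⟨p₁, i₁⟩) :
    ∃ (U W : ∀ p : P, Submodule K (Fin (d p) → K))
      (hU : ∀ (p q : P) (h : p ≤ q), ∀ v ∈ U p, M p q h v ∈ U q)
      (hW : ∀ (p q : P) (h : p ≤ q), ∀ v ∈ W p, M p q h v ∈ W q),
      (∀ p : P, IsCompl (U p) (W p)) ∧
      -- `I = U` is an interval module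
      (∀ p : P, Module.finrank K (U p) ≤ 1) ∧ (∃ p : P, U p ≠ ⊥) ∧
      (∀ (p q : P) (h : p ≤ q), U p ≠ ⊥ →
        Function.Bijective ((M p q h).restrict (hU p q h))) ∧
      -- `S = W` is a nonzero semi-component module
      (∃ p : P, W p ≠ ⊥) ∧
      (∃ b : ∀ p : P, Module.Basis (Fin (Module.finrank K (W p))) K (W p),
        ∀ (p q : P) (h : p ≤ q),
          IsSemiComponentMatrix
            (LinearMap.toMatrix (b p) (b q) ((M p q h).restrict (hW p q h)))) := by
  classical
  obtain ⟨hid, hcompose⟩ := hfunct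
  -- injectivity of single-index
  have single_inj : ∀ {n : ℕ} (a b : Fin n),
      (Pi.single a 1 : Fin n → K) = Pi.single b 1 → a = b := by
    intro n a b hab
    by_contra hne
    have := congrFun hab a
    simp [Pi.single_apply, Ne.symm hne] at this
  -- structure maps send basis vectors to basis vectors
  have hsingle : ∀ (p q : P) (h : p ≤ q) (j : Fin (d p)),
      ∃ i, M p q h (Pi.single j 1) = Pi.single i 1 := by
    intro p q h j
    obtain ⟨h01, huniq⟩ := hcomp p q h
    obtain ⟨i, hi, hiu⟩ := huniq j
    refine ⟨i, funext fun x => ?_⟩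
    have hx : M p q h (Pi.single j 1) x = LinearMap.toMatrix' (M p q h) x j := by
      rw [LinearMap.toMatrix'_apply]
    rw [hx, Pi.single_apply]
    by_cases hxi : x = i
    · subst hxi; simp [hi]
    · rcases h01 x j with h0 | h1
      · simp [h0, hxi]
      · exact absurd (hiu x h1) hxi
  choose fm hfm using hsingle
  -- the sum-of-coordinates functional
  obtain ⟨σ, hσ_apply⟩ : ∃ σ : ∀ p : P, (Fin (d p) → K) →ₗ[K] K,
      ∀ p v, σ p v = ∑ i, v i :=
    ⟨fun p => ∑ i, LinearMap.proj i, fun p v => by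
      simp [LinearMap.sum_apply, LinearMap.proj_apply]⟩
  have hσ_single : ∀ (p : P) (j : Fin (d p)), σ p (Pi.single j 1) = 1 := by
    intro p j
    rw [hσ_apply]
    simp [Pi.single_apply]
  have hσM : ∀ (p q : P) (h : p ≤ q) (v : Fin (d p) → K),
      σ q (M p q h v) = σ p v := by
    intro p q h
    have heq : (σ q).comp (M p q h) = σ p := by
      apply Module.Basis.ext (Pi.basisFun K (Fin (d p)))
      intro j
      simp only [Pi.basisFun_apply, LinearMap.comp_apply, hfm, hσ_single]
    intro v
    exact LinearMap.ext_iff.mp heq v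
  -- every basis vector is hit by a generator from below
  have hup : ∀ (p : P) (j : Fin (d p)), ∃ r, ∃ h : r ≤ p, ∃ k : Fin (d r),
      IsGenerator M r k ∧ M r p h (Pi.single k 1) = Pi.single j 1 := by
    intro p
    induction p using WellFoundedLT.induction with
    | _ p IH =>
    intro j
    by_cases hg : IsGenerator M p j
    · exact ⟨p, le_rfl, j, hg, by rw [hid p]; rfl⟩
    · rw [IsGenerator] at hg
      push_neg at hg
      obtain ⟨q, hle, hne, v, hv⟩ := hg
      have hex : ∃ k, fm q p hle k = j := by
        by_contra hk
        push_neg at hk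
        have h1 : M q p hle v j = ∑ k, v k * ((Pi.single (fm q p hle k) 1 : Fin (d p) → K) j) := by
          conv_lhs => rw [← Finset.univ_sum_single v]
          rw [map_sum, Finset.sum_apply]
          refine Finset.sum_congr rfl fun k _ => ?_
          have e2 : (Pi.single k (v k) : Fin (d q) → K) = v k • (Pi.single k 1 : Fin (d q) → K) := by
            funext x
            simp [Pi.single_apply, mul_ite]
          rw [e2, map_smul, hfm]
          rfl
        have h0 : ∀ k ∈ Finset.univ, v k * ((Pi.single (fm q p hle k) 1 : Fin (d p) → K) j) = 0 := by
          intro k _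
          rw [Pi.single_eq_of_ne (Ne.symm (hk k)), mul_zero]
        have h2 : M q p hle v j = 1 := by rw [hv]; simp
        rw [h2, Finset.sum_eq_zero h0] at h1
        exact one_ne_zero h1
      obtain ⟨k, hk⟩ := hex
      obtain ⟨r, hr, k', hk'gen, hk'⟩ := IH q (lt_of_le_of_ne hle hne) k
      refine ⟨r, hr.trans hle, k', hk'gen, ?_⟩
      have hc := LinearMap.ext_iff.mp (hcompose r q p hr hle) (Pi.single k' 1)
      rw [LinearMap.comp_apply] at hc
      rw [← hc, hk', hfm, hk]
  -- off the up-set of p₁ the module vanishes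
  have hd0 : ∀ p : P, ¬ p₁ ≤ p → d p = 0 := by
    intro p hp
    by_contra h0
    obtain ⟨r, hr, k, hkgen, -⟩ := hup p ⟨0, Nat.pos_of_ne_zero h0⟩
    exact hp ((hmin r k hkgen).trans hr)
  have hzero : ∀ p : P, ¬ p₁ ≤ p → ∀ v : Fin (d p) → K, v = 0 := by
    intro p hp v
    funext i
    exact absurd i.isLt (by have := hd0 p hp; omega)
  -- the distinguished index at each position above p₁
  obtain ⟨φ, hφ⟩ : ∃ φ : ∀ p : P, p₁ ≤ p → Fin (d p),
      ∀ (p : P) (hp : p₁ ≤ p), M p₁ p hp (Pi.single i₁ 1) = Pi.single (φ p hp) 1 :=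
    ⟨fun p hp => fm p₁ p hp i₁, fun p hp => hfm p₁ p hp i₁⟩
  have hφφ : ∀ (p : P) (hp : p₁ ≤ p) (q : P) (h : p ≤ q),
      fm p q h (φ p hp) = φ q (hp.trans h) := by
    intro p hp q h
    apply single_inj
    have hc := LinearMap.ext_iff.mp (hcompose p₁ p q hp h) (Pi.single i₁ 1)
    rw [LinearMap.comp_apply] at hc
    rw [← hfm p q h (φ p hp), ← hφ p hp, hc, hφ q (hp.trans h)]
  have hφp₁ : φ p₁ le_rfl = i₁ := by
    have := hφ p₁ le_rfl
    rw [hid p₁, LinearMap.id_apply] at this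
    exact (single_inj _ _ this).symm
  have hsingle_ne : ∀ (p : P) (j : Fin (d p)), (Pi.single j 1 : Fin (d p) → K) ≠ 0 := by
    intro p j hj
    have := congrFun hj j
    simp at this
  -- the submodules
  obtain ⟨U, hUpos, hUneg⟩ : ∃ U : ∀ p : P, Submodule K (Fin (d p) → K),
      (∀ (p : P) (hp : p₁ ≤ p), U p = K ∙ (Pi.single (φ p hp) 1 : Fin (d p) → K)) ∧
      (∀ p : P, ¬ p₁ ≤ p → U p = ⊥) :=
    ⟨fun p => if hp : p₁ ≤ p then K ∙ (Pi.single (φ p hp) 1 : Fin (d p) → K) else ⊥,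
      fun p hp => dif_pos hp, fun p hp => dif_neg hp⟩
  obtain ⟨W, hWdef⟩ : ∃ W : ∀ p : P, Submodule K (Fin (d p) → K),
      ∀ p : P, W p = LinearMap.ker (σ p) := ⟨fun p => LinearMap.ker (σ p), fun p => rfl⟩
  have hWmem : ∀ (p : P) (v : Fin (d p) → K), v ∈ W p ↔ σ p v = 0 := by
    intro p v; rw [hWdef, LinearMap.mem_ker]
  have hUmem : ∀ (p : P) (hp : p₁ ≤ p) (v : Fin (d p) → K),
      v ∈ U p ↔ ∃ c : K, c • (Pi.single (φ p hp) 1 : Fin (d p) → K) = v := by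
    intro p hp v; rw [hUpos p hp, Submodule.mem_span_singleton]
  -- invariance
  have hU : ∀ (p q : P) (h : p ≤ q), ∀ v ∈ U p, M p q h v ∈ U q := by
    intro p q h v hv
    by_cases hp : p₁ ≤ p
    · obtain ⟨c, rfl⟩ := (hUmem p hp v).mp hv
      refine (hUmem q (hp.trans h) _).mpr ⟨c, ?_⟩
      rw [map_smul, hfm, hφφ p hp q h]
    · rw [hUneg p hp, Submodule.mem_bot] at hv
      rw [hv, map_zero]
      exact Submodule.zero_mem _
  have hW : ∀ (p q : P) (h : p ≤ q), ∀ v ∈ W p, M p q h v ∈ W q := by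
    intro p q h v hv
    rw [hWmem] at hv ⊢
    rw [hσM, hv]
  -- complementarity
  have hcompl : ∀ p : P, IsCompl (U p) (W p) := by
    intro p
    by_cases hp : p₁ ≤ p
    · constructor
      · rw [Submodule.disjoint_def]
        intro x hxU hxW
        obtain ⟨c, rfl⟩ := (hUmem p hp x).mp hxU
        rw [hWmem, map_smul, hσ_single, smul_eq_mul, mul_one] at hxW
        rw [hxW, zero_smul]
      · rw [codisjoint_iff, eq_top_iff]
        intro v _
        rw [Submodule.mem_sup]
        refine ⟨σ p v • (Pi.single (φ p hp) 1 : Fin (d p) → K), (hUmem p hp _).mpr ⟨_, rfl⟩,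
          v - σ p v • (Pi.single (φ p hp) 1 : Fin (d p) → K), ?_, by abel⟩
        rw [hWmem, map_sub, map_smul, hσ_single, smul_eq_mul, mul_one, sub_self]
    · have hT : W p = ⊤ := by
        rw [eq_top_iff]
        intro v _
        rw [hWmem, hzero p hp v, map_zero]
      rw [hUneg p hp, hT]
      exact isCompl_bot_top
  -- U has rank at most one
  have hUrank : ∀ p : P, Module.finrank K (U p) ≤ 1 := by
    intro p
    by_cases hp : p₁ ≤ p
    · rw [hUpos p hp, finrank_span_singleton (hsingle_ne p (φ p hp))]
    · rw [hUneg p hp]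
      simp
  have hUne : U p₁ ≠ ⊥ := by
    rw [hUpos p₁ le_rfl]
    simpa [Submodule.span_singleton_eq_bot] using hsingle_ne p₁ (φ p₁ le_rfl)
  -- bijectivity of restricted maps on the support of U
  have hbij : ∀ (p q : P) (h : p ≤ q), U p ≠ ⊥ →
      Function.Bijective ((M p q h).restrict (hU p q h)) := by
    intro p q h hne
    have hp : p₁ ≤ p := by
      by_contra hp
      exact hne (hUneg p hp)
    have hq : p₁ ≤ q := hp.trans h
    have key : ∀ c : K, M p q h (c • (Pi.single (φ p hp) 1 : Fin (d p) → K)) =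
        c • (Pi.single (φ q hq) 1 : Fin (d q) → K) := by
      intro c
      rw [map_smul, hfm, hφφ p hp q h]
    constructor
    · intro x y hxy
      obtain ⟨c, hc⟩ := (hUmem p hp x).mp x.2
      obtain ⟨c', hc'⟩ := (hUmem p hp y).mp y.2
      have hco : M p q h ↑x = M p q h ↑y := congrArg Subtype.val hxy
      rw [← hc, ← hc', key, key] at hco
      have := congrFun hco (φ q hq)
      simp only [Pi.smul_apply, Pi.single_eq_same, smul_eq_mul, mul_one] at this
      apply Subtype.ext
      rw [← hc, ← hc', this]
    · intro y
      obtain ⟨c, hc⟩ := (hUmem q hq y).mp y.2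
      refine ⟨⟨c • (Pi.single (φ p hp) 1 : Fin (d p) → K), (hUmem p hp _).mpr ⟨c, rfl⟩⟩, ?_⟩
      apply Subtype.ext
      rw [LinearMap.restrict_apply]
      show M p q h (c • (Pi.single (φ p hp) 1 : Fin (d p) → K)) = ↑y
      rw [key, hc]
  -- W is nonzero somewhere
  obtain ⟨q₀, j₀, hgj₀, hne₀⟩ := htwo
  have hq₀ : p₁ ≤ q₀ := hmin q₀ j₀ hgj₀
  have hjφ₀ : j₀ ≠ φ q₀ hq₀ := by
    intro hj
    by_cases hqp : q₀ = p₁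
    · subst hqp
      have : φ q₀ hq₀ = i₁ := hφp₁
      exact hne₀ (by rw [hj, this])
    · exact hgj₀ p₁ hq₀ (fun hh => hqp hh.symm) ⟨Pi.single i₁ 1, by rw [hφ q₀ hq₀, ← hj]⟩
  have hWne : W q₀ ≠ ⊥ := by
    rw [Submodule.ne_bot_iff]
    refine ⟨Pi.single j₀ 1 - Pi.single (φ q₀ hq₀) 1, ?_, ?_⟩
    · rw [hWmem, map_sub, hσ_single, hσ_single, sub_self]
    · intro hw
      have := congrFun hw j₀
      simp [Pi.single_eq_of_ne, hjφ₀] at this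
  refine ⟨U, W, hU, hW, hcompl, hUrank, ⟨p₁, hUne⟩, hbij, ⟨q₀, hWne⟩, ?_⟩
  -- the difference basis of W p over the support
  have ha : ∀ (p : P) (hp : p₁ ≤ p) (g : {j : Fin (d p) // j ≠ φ p hp} → K)
      (i : Fin (d p)) (hi : i ≠ φ p hp),
      ((∑ j : {j : Fin (d p) // j ≠ φ p hp},
        g j • ((Pi.single j.1 1 : Fin (d p) → K) - Pi.single (φ p hp) 1) : Fin (d p) → K)) i = g ⟨i, hi⟩ := by
    intro p hp g i hi
    rw [Finset.sum_apply]
    have hterm : ∀ j : {j : Fin (d p) // j ≠ φ p hp},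
        ((g j • ((Pi.single j.1 1 : Fin (d p) → K) - Pi.single (φ p hp) 1) : Fin (d p) → K)) i
          = if j = ⟨i, hi⟩ then g j else 0 := by
      intro j
      rw [Pi.smul_apply, Pi.sub_apply, Pi.single_eq_of_ne hi, sub_zero, Pi.single_apply]
      by_cases hj : j = (⟨i, hi⟩ : {j : Fin (d p) // j ≠ φ p hp})
      · subst hj; simp
      · have hne2 : ¬ (i = j.1) := fun hh => hj (Subtype.ext hh.symm)
        simp [hne2, hj]
    rw [Finset.sum_congr rfl (fun j _ => hterm j), Finset.sum_ite_eq' Finset.univ (⟨i, hi⟩ : {j : Fin (d p) // j ≠ φ p hp}) g]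
    simp
  have hbfml : ∀ (p : P) (hp : p₁ ≤ p) (g : {j : Fin (d p) // j ≠ φ p hp} → K),
      ((∑ j : {j : Fin (d p) // j ≠ φ p hp},
        g j • ((Pi.single j.1 1 : Fin (d p) → K) - Pi.single (φ p hp) 1) : Fin (d p) → K)) (φ p hp)
          = - ∑ j, g j := by
    intro p hp g
    rw [Finset.sum_apply, ← Finset.sum_neg_distrib]
    refine Finset.sum_congr rfl fun j _ => ?_
    rw [Pi.smul_apply, Pi.sub_apply, Pi.single_eq_of_ne (Ne.symm j.2), Pi.single_eq_same]
    simp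
  have hbasis : ∀ (p : P) (hp : p₁ ≤ p),
      ∃ bp : Module.Basis {j : Fin (d p) // j ≠ φ p hp} K (W p),
        ∀ j, (bp j : Fin (d p) → K) = Pi.single j.1 1 - Pi.single (φ p hp) 1 := by
    intro p hp
    have hmemW : ∀ j : {j : Fin (d p) // j ≠ φ p hp},
        ((Pi.single j.1 1 : Fin (d p) → K) - Pi.single (φ p hp) 1) ∈ W p := by
      intro j
      rw [hWmem, map_sub, hσ_single, hσ_single, sub_self]
    have hli : LinearIndependent K (fun j : {j : Fin (d p) // j ≠ φ p hp} =>
        (⟨_, hmemW j⟩ : W p)) := by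
      apply LinearIndependent.of_comp (W p).subtype
      rw [Fintype.linearIndependent_iff]
      intro g hg j
      have h1 := congrFun hg j.1
      exact (ha p hp g j.1 j.2).symm.trans h1
    have hsp : ⊤ ≤ Submodule.span K (Set.range (fun j : {j : Fin (d p) // j ≠ φ p hp} =>
        (⟨_, hmemW j⟩ : W p))) := by
      intro y _
      have hy0 : ∑ i, (y : Fin (d p) → K) i = 0 := by
        rw [← hσ_apply]
        exact (hWmem p _).mp y.2
      have hsubty : ∑ j : {j : Fin (d p) // j ≠ φ p hp}, (y : Fin (d p) → K) j.1
          = ∑ i ∈ Finset.univ.erase (φ p hp), (y : Fin (d p) → K) i :=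
        (Finset.sum_subtype (Finset.univ.erase (φ p hp))
          (fun i => by simp [Finset.mem_erase]) (fun i => (y : Fin (d p) → K) i)).symm
      have herase : (y : Fin (d p) → K) (φ p hp)
          + ∑ i ∈ Finset.univ.erase (φ p hp), (y : Fin (d p) → K) i = 0 := by
        rw [Finset.add_sum_erase Finset.univ _ (Finset.mem_univ _)]
        exact hy0
      have hrep : (y : Fin (d p) → K) = ∑ j : {j : Fin (d p) // j ≠ φ p hp},
          (y : Fin (d p) → K) j.1 • ((Pi.single j.1 1 : Fin (d p) → K) - Pi.single (φ p hp) 1) := by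
        funext i
        by_cases hi : i = φ p hp
        · subst hi
          rw [hbfml p hp, hsubty]
          linear_combination herase
        · rw [ha p hp _ i hi]
      have hrep2 : y = ∑ j : {j : Fin (d p) // j ≠ φ p hp},
          (y : Fin (d p) → K) j.1 • (⟨_, hmemW j⟩ : W p) := by
        apply Subtype.ext
        rw [Submodule.coe_sum]
        exact hrep.trans (Finset.sum_congr rfl fun j _ => rfl)
      rw [hrep2]
      exact Submodule.sum_mem _ fun j _ =>
        Submodule.smul_mem _ _ (Submodule.subset_span ⟨j, rfl⟩)
    exact ⟨Module.Basis.mk hli hsp, fun j => by rw [Module.Basis.mk_apply]⟩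
  choose bs hbs using hbasis
  refine ⟨fun p => if hp : p₁ ≤ p then
      (bs p hp).reindex (Fintype.equivFinOfCardEq (Module.finrank_eq_card_basis (bs p hp)).symm)
    else Module.finBasis K (W p), ?_⟩
  intro p q h
  by_cases hp : p₁ ≤ p
  · have hq : p₁ ≤ q := hp.trans h
    simp only [dif_pos hp, dif_pos hq]
    have himg : ∀ j : {j : Fin (d p) // j ≠ φ p hp},
        ((M p q h).restrict (hW p q h)) (bs p hp j)
          = if hc : fm p q h j.1 = φ q hq then 0 else bs q hq ⟨fm p q h j.1, hc⟩ := by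
      intro j
      apply Subtype.ext
      rw [LinearMap.restrict_apply]
      show M p q h ↑(bs p hp j) = _
      rw [hbs p hp j, map_sub, hfm, hfm, hφφ p hp q h]
      by_cases hc : fm p q h j.1 = φ q hq
      · rw [dif_pos hc, hc, sub_self]
        rfl
      · rw [dif_neg hc, hbs q hq ⟨fm p q h j.1, hc⟩]
    constructor
    · intro i j
      rw [LinearMap.toMatrix_apply, Module.Basis.reindex_apply, Module.Basis.repr_reindex_apply, himg]
      by_cases hc : fm p q h ((Fintype.equivFinOfCardEq (Module.finrank_eq_card_basis (bs p hp)).symm).symm j).1 = φ q hq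
      · rw [dif_pos hc]
        left
        rw [(bs q hq).repr.map_zero]
        rfl
      · rw [dif_neg hc, Module.Basis.repr_self, Finsupp.single_apply]
        split
        · right; rfl
        · left; rfl
    · intro j i i' h1 h2
      rw [LinearMap.toMatrix_apply, Module.Basis.reindex_apply, Module.Basis.repr_reindex_apply, himg] at h1 h2
      by_cases hc : fm p q h ((Fintype.equivFinOfCardEq (Module.finrank_eq_card_basis (bs p hp)).symm).symm j).1 = φ q hq
      · rw [dif_pos hc, (bs q hq).repr.map_zero] at h1
        exact absurd h1.symm one_ne_zero
      · rw [dif_neg hc, Module.Basis.repr_self, Finsupp.single_apply] at h1 h2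
        have e1 : (⟨fm p q h _, hc⟩ : {j : Fin (d q) // j ≠ φ q hq})
            = (Fintype.equivFinOfCardEq (Module.finrank_eq_card_basis (bs q hq)).symm).symm i := by
          by_contra hcon
          rw [if_neg hcon] at h1
          exact one_ne_zero h1.symm
        have e2 : (⟨fm p q h _, hc⟩ : {j : Fin (d q) // j ≠ φ q hq})
            = (Fintype.equivFinOfCardEq (Module.finrank_eq_card_basis (bs q hq)).symm).symm i' := by
          by_contra hcon
          rw [if_neg hcon] at h2
          exact one_ne_zero h2.symm
        exact (Fintype.equivFinOfCardEq (Module.finrank_eq_card_basis (bs q hq)).symm).symm.injective (e1.symm.trans e2)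
  · have hsub : Subsingleton (W p) :=
      ⟨fun a b => Subtype.ext (by rw [hzero p hp ↑a, hzero p hp ↑b])⟩
    have h0 : Module.finrank K (W p) = 0 := Module.finrank_zero_of_subsingleton
    have hemp : IsEmpty (Fin (Module.finrank K (W p))) := by
      rw [h0]
      infer_instance
    constructor
    · intro i j
      exact (hemp.false j).elim
    · intro j i i' _ _
      exact (hemp.false j).elim
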